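/- Let S be a commutative semiring with idempotent addition (1 + 1 = 1), let X be a finite set, and let r be a partial order on X. Then r is observationally equivalent to the sum of all total orders on X extending r: for every partial order s on X, ⟨r, s⟩ = Σ_{t total, r ⊆ t} ⟨t, s⟩, where ⟨p,q⟩ = 1 if p and q are compatible and 0 otherwise. -/

import Mathlib

/-- Two relations are compatible when the transitive closure of their union is
antisymmetric (i.e. the union is acyclic). -/
def Compatible {X : Type*} (r s : X → X → Prop) : Prop :=
  ∀ a b : X, Relation.TransGen (fun u v => r u v ∨ s u v) a b →
    Relation.TransGen (fun u v => r u v ∨ s u v) b a → a = b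

open Classical in
/-- The compatibility pairing with values in a commutative semiring. -/
noncomputable def bracket {X : Type*} (S : Type*) [CommSemiring S]
    (r s : X → X → Prop) : S :=
  if Compatible r s then 1 else 0

open Classical in
lemma sum_ite_exists {S : Type*} [CommSemiring S] (hidem : (1 : S) + 1 = 1)
    {ι : Type*} (A : Finset ι) (P : ι → Prop) :
    (∑ i ∈ A, if P i then (1 : S) else 0) = if ∃ i ∈ A, P i then 1 else 0 := by
  induction A using Finset.cons_induction with
  | empty => simp
  | cons a A' hx ih =>
    rw [Finset.sum_cons, ih]
    have hmem : (∃ i ∈ Finset.cons a A' hx, P i) ↔ P a ∨ ∃ i ∈ A', P i := by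
      simp [Finset.mem_cons, or_and_right, exists_or]
    rw [if_congr hmem rfl rfl]
    by_cases hPa : P a <;> by_cases hE : ∃ i ∈ A', P i <;>
      simp [hPa, hE, hidem]

theorem stmt12 {X : Type*} [Finite X] {S : Type*} [CommSemiring S]
    (hidem : (1 : S) + 1 = 1)
    (r : X → X → Prop) (hr : IsPartialOrder X r)
    {ι : Type*} [Fintype ι] (t : ι → (X → X → Prop)) (ht : Function.Injective t)
    (hext : ∀ i, IsLinearOrder X (t i) ∧ ∀ a b : X, r a b → t i a b)
    (hall : ∀ u : X → X → Prop, IsLinearOrder X u → (∀ a b : X, r a b → u a b) →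
      ∃ i, u = t i)
    (s : X → X → Prop) (hs : IsPartialOrder X s) :
    bracket S r s = ∑ i, bracket S (t i) s := by
  classical
  have key : Compatible r s ↔ ∃ i, Compatible (t i) s := by
    constructor
    · intro hc
      set p : X → X → Prop := fun a b =>
        a = b ∨ Relation.TransGen (fun u v => r u v ∨ s u v) a b with hp
      have hpp : IsPartialOrder X p :=
        { refl := fun a => Or.inl rfl
          trans := by
            intro a b c hab hbc
            rcases hab with rfl | hab
            · exact hbc
            rcases hbc with rfl | hbc
            · exact Or.inr hab
            · exact Or.inr (hab.trans hbc)
          antisymm := by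
            intro a b hab hba
            rcases hab with rfl | hab
            · rfl
            rcases hba with rfl | hba
            · rfl
            · exact hc a b hab hba }
      obtain ⟨u, hu, hpu⟩ := @extend_partialOrder X p hpp
      have hur : ∀ a b, r a b → u a b := fun a b h =>
        hpu a b (Or.inr (Relation.TransGen.single (Or.inl h)))
      have hus : ∀ a b, u a b ∨ s a b → u a b := by
        rintro a b (h | h)
        · exact h
        · exact hpu a b (Or.inr (Relation.TransGen.single (Or.inr h)))
      have htc : ∀ a b, Relation.TransGen (fun x y => u x y ∨ s x y) a b → u a b := by
        intro a b h
        induction h with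
        | single h => exact hus _ _ h
        | tail _ h ih => exact hu.trans _ _ _ ih (hus _ _ h)
      have hcomp : Compatible u s := fun a b hab hba =>
        hu.antisymm _ _ (htc _ _ hab) (htc _ _ hba)
      obtain ⟨i, hi⟩ := hall u hu hur
      exact ⟨i, hi ▸ hcomp⟩
    · rintro ⟨i, hi⟩
      intro a b hab hba
      have mono : ∀ x y, Relation.TransGen (fun u v => r u v ∨ s u v) x y →
          Relation.TransGen (fun u v => t i u v ∨ s u v) x y := fun x y h =>
        Relation.TransGen.mono (fun u v (h : r u v ∨ s u v) => h.imp ((hext i).2 u v) id) x y h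
      exact hi a b (mono _ _ hab) (mono _ _ hba)
  simp only [bracket]
  rw [sum_ite_exists hidem]
  simp only [Finset.mem_univ, true_and]
  congr 1
  simp [key, exists_prop]
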